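/- For every infinite cardinal κ there exists a linear order X of cardinality 2^κ that contains no well-ordered subset of cardinality greater than κ and no reversely well-ordered subset of cardinality greater than κ; in particular X contains no well-ordered 2^κ-full subset of order type greater than κ. -/

import Mathlib

open Cardinal Set Ordinal

universe u

/-- `Y` is `l`-full on the right in `X`: for every `y ∈ Y`, the union of the
intervals `(y, y')_X` over larger elements `y' ∈ Y` has cardinality `l`. -/
def FullRight {X : Type u} [LinearOrder X] (l : Cardinal.{u}) (Y : Set X) : Prop :=
  ∀ y ∈ Y, #{x : X | ∃ y' ∈ Y, y < y' ∧ y < x ∧ x < y'} = l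

/-- `Y` is `l`-full on the left in `X`. -/
def FullLeft {X : Type u} [LinearOrder X] (l : Cardinal.{u}) (Y : Set X) : Prop :=
  ∀ y ∈ Y, #{x : X | ∃ y' ∈ Y, y' < y ∧ y' < x ∧ x < y} = l

/-- `Y` is completely `l`-full in `X`: every interval of `X` between two
elements of `Y` has cardinality `l`. -/
def CompletelyFull {X : Type u} [LinearOrder X] (l : Cardinal.{u}) (Y : Set X) : Prop :=
  ∀ y ∈ Y, ∀ y' ∈ Y, y < y' → #{x : X | y < x ∧ x < y'} = l


lemma lex_lt_def' {ι : Type u} [LinearOrder ι] [WellFoundedLT ι] {x y : Lex (ι → Bool)} :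
    x < y ↔ ∃ i, (∀ j, j < i → ofLex x j = ofLex y j) ∧ ofLex x i < ofLex y i :=
  Iff.rfl

lemma key_lemma : ∀ (o : Ordinal.{u}) (ι : Type u) [LinearOrder ι] [WellFoundedLT ι],
    Ordinal.type ((· < ·) : ι → ι → Prop) = o →
    ∀ S : Set (Lex (ι → Bool)), S.WellFoundedOn (· < ·) → #S ≤ #ι + ℵ₀ := by
  intro o
  induction o using Ordinal.induction with
  | h o IH =>
  intro ι _ _ hto S hS
  by_cases hemp : IsEmpty ι
  · have : Subsingleton (Lex (ι → Bool)) := ⟨fun a b => funext fun i => hemp.elim i⟩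
    calc #S ≤ 1 := mk_le_one_iff_set_subsingleton.mpr (subsingleton_of_subsingleton)
    _ ≤ #ι + ℵ₀ := le_trans one_le_aleph0 le_add_self
  have hne : Nonempty ι := not_isEmpty_iff.mp hemp
  by_contra hcon
  push_neg at hcon
  set μ : Cardinal.{u} := #ι + ℵ₀ with hμdef
  have hμinf : ℵ₀ ≤ μ := le_add_self
  have hιμ : #ι ≤ μ := self_le_add_right _ _
  have hν : Order.succ μ ≤ #S := Order.succ_le_of_lt hcon
  haveI hWF : WellFoundedLT S := ⟨hS⟩
  haveI : NoMaxOrder (Order.succ μ).ord.ToType := Cardinal.noMaxOrder (hμinf.trans (Order.le_succ μ))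
  letI : SuccOrder (Order.succ μ).ord.ToType := SuccOrder.ofLinearWellFoundedLT _
  have h2 : @Ordinal.type (Order.succ μ).ord.ToType (· < ·) isWellOrder_lt ≤
      @Ordinal.type S (· < ·) isWellOrder_lt := by
    rw [type_toType, Cardinal.ord_le, Ordinal.card_type]
    exact hν
  obtain ⟨emb⟩ := (@Ordinal.type_le_iff' _ _ _ _ isWellOrder_lt isWellOrder_lt).mp h2
  have hF : StrictMono (fun t => ((emb t : S) : Lex (ι → Bool))) := fun a b h => emb.map_rel_iff.mpr h
  set F := (fun t => ((emb t : S) : Lex (ι → Bool))) with hFdef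
  have hsucc : ∀ t, F t < F (Order.succ t) := fun t => hF (Order.lt_succ t)
  set d : (Order.succ μ).ord.ToType → ι := fun t => (lex_lt_def'.mp (hsucc t)).choose with hddef
  have hdspec : ∀ t, (∀ j, j < d t → ofLex (F t) j = ofLex (F (Order.succ t)) j) ∧
      ofLex (F t) (d t) < ofLex (F (Order.succ t)) (d t) :=
    fun t => (lex_lt_def'.mp (hsucc t)).choose_spec
  -- pigeonhole
  have hfiber : ∃ i : ι, μ < #(d ⁻¹' {i}) := by
    by_contra hc
    push_neg at hc
    have h3 : #(Order.succ μ).ord.ToType ≤ #ι * μ := by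
      have huniv : (Set.univ : Set (Order.succ μ).ord.ToType) = ⋃ i : ι, d ⁻¹' {i} := by
        ext t; simp [Set.mem_iUnion]
      calc #(Order.succ μ).ord.ToType = #(Set.univ : Set (Order.succ μ).ord.ToType) := (Cardinal.mk_univ).symm
        _ = #(⋃ i : ι, d ⁻¹' {i}) := by rw [huniv]
        _ ≤ #ι * ⨆ i : ι, #(d ⁻¹' {i}) := Cardinal.mk_iUnion_le _
        _ ≤ #ι * μ := mul_le_mul_right (ciSup_le' hc) _
    rw [Cardinal.mk_ord_toType] at h3
    have : Order.succ μ ≤ μ := h3.trans (by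
      calc #ι * μ ≤ μ * μ := mul_le_mul_left hιμ _
        _ = μ := Cardinal.mul_eq_self hμinf)
    exact (Order.lt_succ μ).not_ge this
  obtain ⟨i₀, hi₀⟩ := hfiber
  set A := d ⁻¹' {i₀} with hAdef
  set ι' := {j : ι // j < i₀} with hι'def
  set g : A → Lex (ι' → Bool) := fun a => toLex (fun j => ofLex (F a.1) j.1) with hgdef
  have hgmono : ∀ a b : A, (a : (Order.succ μ).ord.ToType) < (b : _) → g a < g b := by
    intro a b hab
    have hda := hdspec a.1
    have hdb := hdspec b.1
    rw [show d a.1 = i₀ from a.2] at hda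
    rw [show d b.1 = i₀ from b.2] at hdb
    obtain ⟨hxa, hxa'⟩ := Bool.lt_iff.mp hda.2
    obtain ⟨hyb, hyb'⟩ := Bool.lt_iff.mp hdb.2
    obtain ⟨k, hka, hkl⟩ := lex_lt_def'.mp (hF hab)
    rcases lt_trichotomy k i₀ with hk | hk | hk
    · exact lex_lt_def'.mpr ⟨⟨k, hk⟩, fun j hj => hka j.1 hj, hkl⟩
    · exfalso
      subst hk
      rw [hyb] at hkl
      exact absurd hkl (by simp [Bool.lt_iff])
    · exfalso
      have hx'y : F (Order.succ a.1) ≤ F b.1 := hF.monotone (Order.succ_le_of_lt hab)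
      have : F b.1 < F (Order.succ a.1) := lex_lt_def'.mpr ⟨i₀,
        fun j hj => by rw [← hka j (hj.trans hk), ← hda.1 j hj],
        by rw [← hka i₀ hk, hxa, hxa']; exact Bool.false_lt_true⟩
      exact this.not_ge hx'y
  have hgsm : StrictMono g := fun a b h => hgmono a b h
  have hwfrange : (Set.range g).WellFoundedOn (· < ·) := by
    rw [Set.wellFoundedOn_range]
    exact Subrelation.wf (fun h => hgsm.lt_iff_lt.mp h) (Subtype.wellFoundedLT (· ∈ A)).wf
  have hlt : Ordinal.type ((· < ·) : ι' → ι' → Prop) < o := by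
    rw [← hto]
    exact typein_lt_type ((· < ·) : ι → ι → Prop) i₀
  have hIH := IH _ hlt ι' rfl (Set.range g) hwfrange
  have hcard : #(Set.range g) = #A := Cardinal.mk_range_eq g hgsm.injective
  have : μ < μ := by
    calc μ < #A := hi₀
      _ = #(Set.range g) := hcard.symm
      _ ≤ #ι' + ℵ₀ := hIH
      _ ≤ #ι + ℵ₀ := add_le_add_left (Cardinal.mk_subtype_le _) _
  exact absurd this (lt_irrefl μ)

lemma chain_bound (ι : Type u) [LinearOrder ι] [WellFoundedLT ι]
    (S : Set (Lex (ι → Bool))) (hS : S.WellFoundedOn (· < ·)) : #S ≤ #ι + ℵ₀ :=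
  key_lemma _ ι rfl S hS

lemma flip_lt_flip {ι : Type u} [LinearOrder ι] [WellFoundedLT ι] {x y : Lex (ι → Bool)}
    (h : x < y) :
    (toLex (fun i => !(ofLex y i)) : Lex (ι → Bool)) < toLex (fun i => !(ofLex x i)) := by
  obtain ⟨i, hagree, hlt⟩ := lex_lt_def'.mp h
  obtain ⟨h1, h2⟩ := Bool.lt_iff.mp hlt
  refine lex_lt_def'.mpr ⟨i, fun j hj => ?_, ?_⟩
  · show (!(ofLex y j)) = (!(ofLex x j))
    rw [hagree j hj]
  · show (!(ofLex y i)) < (!(ofLex x i))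
    rw [h1, h2]
    exact Bool.false_lt_true

lemma chain_bound_gt (ι : Type u) [LinearOrder ι] [WellFoundedLT ι]
    (S : Set (Lex (ι → Bool))) (hS : S.WellFoundedOn (· > ·)) : #S ≤ #ι + ℵ₀ := by
  set neg : Lex (ι → Bool) → Lex (ι → Bool) := fun x => toLex (fun i => !(ofLex x i)) with hneg
  have hnn : ∀ x, neg (neg x) = x := fun x => by
    simp only [hneg]
    exact congrArg toLex (funext fun i => Bool.not_not _)
  have hinj : Function.Injective neg := fun a b hab => by rw [← hnn a, hab, hnn]
  have h1 : (neg '' S).WellFoundedOn (· < ·) := by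
    let φ : (neg '' S) → S := fun x => ⟨neg x.1, by
      obtain ⟨y, hy, hxy⟩ := x.2
      rw [← hxy, hnn]; exact hy⟩
    refine Subrelation.wf (r := InvImage (fun a b : S => (a : Lex (ι → Bool)) > (b : _)) φ) ?_
      (InvImage.wf φ hS)
    intro a b hab
    show (neg b.1) < (neg a.1)
    exact flip_lt_flip hab
  have := chain_bound ι (neg '' S) h1
  rwa [Cardinal.mk_image_eq hinj] at this

/-- Proposition 2.7: for every infinite `κ` there is a linear order of
cardinality `2 ^ κ` with no (reversely) well-ordered subset of cardinality
`> κ`; in particular no `2 ^ κ`-full (reversely) well-ordered subset of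
cardinality `> κ`. -/
theorem stmt7 (κ : Cardinal.{u}) (hκ : Cardinal.aleph0 ≤ κ) :
    ∃ (X : Type u) (_ : LinearOrder X), #X = 2 ^ κ ∧
      (∀ S : Set X, S.WellFoundedOn (· < ·) → #S ≤ κ) ∧
      (∀ S : Set X, S.WellFoundedOn (· > ·) → #S ≤ κ) ∧
      ¬(∃ S : Set X, (S.WellFoundedOn (· < ·) ∨ S.WellFoundedOn (· > ·)) ∧
        (FullRight (2 ^ κ) S ∨ FullLeft (2 ^ κ) S) ∧ κ < #S) := by
  have hb1 : ∀ S : Set (Lex (κ.ord.ToType → Bool)), S.WellFoundedOn (· < ·) → #S ≤ κ := by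
    intro S hS
    have := chain_bound κ.ord.ToType S hS
    rwa [Cardinal.mk_ord_toType, Cardinal.add_eq_left hκ hκ] at this
  have hb2 : ∀ S : Set (Lex (κ.ord.ToType → Bool)), S.WellFoundedOn (· > ·) → #S ≤ κ := by
    intro S hS
    have := chain_bound_gt κ.ord.ToType S hS
    rwa [Cardinal.mk_ord_toType, Cardinal.add_eq_left hκ hκ] at this
  refine ⟨Lex (κ.ord.ToType → Bool), inferInstance, ?_, hb1, hb2, ?_⟩
  · have h1 : #(Lex (κ.ord.ToType → Bool)) = #(κ.ord.ToType → Bool) := rfl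
    rw [h1, Cardinal.mk_arrow, Cardinal.mk_bool, Cardinal.mk_ord_toType]
    simp
  · rintro ⟨S, hwf | hwf, -, hlt⟩
    · exact hlt.not_ge (hb1 S hwf)
    · exact hlt.not_ge (hb2 S hwf)
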